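/- Let v : ℝ³ → ℝ³ be a smooth vector field, let θ = Σ_i q_i dx_i be the tautological one-form on ℝ⁶ = ℝ³ × ℝ³, and let ι(x) = (x, v(x)). Then the pullback ι*(θ ∧ dθ) equals the 3-form x ↦ ⟨v(x), (∇×v)(x)⟩ dx₁ ∧ dx₂ ∧ dx₃; concretely, for every x ∈ ℝ³ and all u, w, z ∈ ℝ³: (θ ∧ dθ)_{ι(x)}(Dι(x)u, Dι(x)w, Dι(x)z) = ⟨v(x), curl v(x)⟩ · det[u, w, z], where curl v = (∂_2 v_3 − ∂_3 v_2, ∂_3 v_1 − ∂_1 v_3, ∂_1 v_2 − ∂_2 v_1). -/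

import Mathlib

/-- The partial derivative in the `j`-th coordinate direction. -/
noncomputable def pd {m : ℕ} (j : Fin m) (f : (Fin m → ℝ) → ℝ) : (Fin m → ℝ) → ℝ :=
  fun x => fderiv ℝ f x (Pi.single j 1)

/-- The value of the 3-form `θ ∧ dθ` on `ℝ³ × ℝ³` (with `θ = Σᵢ qᵢ dxⁱ` the tautological
one-form and `dθ = Σᵢ dqᵢ ∧ dxⁱ`) at the point `pt`, evaluated on `a, b, c`. -/
def thetaDthetaVal (pt a b c : (Fin 3 → ℝ) × (Fin 3 → ℝ)) : ℝ :=
  (∑ i, pt.2 i * a.1 i) * (∑ i, (b.2 i * c.1 i - c.2 i * b.1 i))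
  - (∑ i, pt.2 i * b.1 i) * (∑ i, (a.2 i * c.1 i - c.2 i * a.1 i))
  + (∑ i, pt.2 i * c.1 i) * (∑ i, (a.2 i * b.1 i - b.2 i * a.1 i))

/-- For the graph map `ι(x) = (x, v(x))` of a smooth vector field `v` on
`ℝ³`, the pullback of `θ ∧ dθ` equals the helicity density `⟨v, curl v⟩` times the volume
form `dx₁ ∧ dx₂ ∧ dx₃`. -/
theorem stmt_11 (v : (Fin 3 → ℝ) → (Fin 3 → ℝ)) (hv : ContDiff ℝ (⊤ : ℕ∞) v)
    (ι : (Fin 3 → ℝ) → (Fin 3 → ℝ) × (Fin 3 → ℝ)) (hι : ∀ x, ι x = (x, v x))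
    (curl : (Fin 3 → ℝ) → (Fin 3 → ℝ))
    (hcurl : ∀ x, curl x =
      ![pd 1 (fun y => v y 2) x - pd 2 (fun y => v y 1) x,
        pd 2 (fun y => v y 0) x - pd 0 (fun y => v y 2) x,
        pd 0 (fun y => v y 1) x - pd 1 (fun y => v y 0) x]) :
    ∀ (x u w z : Fin 3 → ℝ),
      thetaDthetaVal (ι x) (fderiv ℝ ι x u) (fderiv ℝ ι x w) (fderiv ℝ ι x z) =
        (∑ i, v x i * curl x i) * Matrix.det (Matrix.transpose (Matrix.of ![u, w, z])) := by
  intro x u w z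
  have hvd : Differentiable ℝ v := hv.differentiable (by simp)
  have hι' : ι = fun y => (y, v y) := funext hι
  set D := fderiv ℝ v x with hD
  obtain ⟨d, hd⟩ : ∃ d : Fin 3 → Fin 3 → ℝ,
      ∀ i j, D (Pi.single j 1 : Fin 3 → ℝ) i = d i j := ⟨_, fun _ _ => rfl⟩
  have hfι : fderiv ℝ ι x = (ContinuousLinearMap.id ℝ (Fin 3 → ℝ)).prod D := by
    rw [hι']
    exact (HasFDerivAt.prodMk (hasFDerivAt_id x) (hvd x).hasFDerivAt).fderiv
  have hpd : ∀ (i j : Fin 3), pd j (fun y => v y i) x = d i j := by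
    intro i j
    have h := ((ContinuousLinearMap.proj i :
        (Fin 3 → ℝ) →L[ℝ] ℝ)).hasFDerivAt.comp x (hvd x).hasFDerivAt
    have h2 : HasFDerivAt (fun y => v y i)
        ((ContinuousLinearMap.proj i : (Fin 3 → ℝ) →L[ℝ] ℝ).comp D) x := h
    rw [pd, h2.fderiv, ← hd]
    rfl
  have hDu : ∀ (a : Fin 3 → ℝ) (i : Fin 3), D a i = ∑ j, a j * d i j := by
    intro a i
    have ha : a = ∑ j, a j • (Pi.single j 1 : Fin 3 → ℝ) := by
      funext k
      simp [Finset.sum_apply, Pi.single_apply, Finset.sum_ite_eq', mul_comm]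
    calc D a i = D (∑ j, a j • (Pi.single j 1 : Fin 3 → ℝ)) i := by rw [← ha]
    _ = (∑ j, a j • D (Pi.single j 1 : Fin 3 → ℝ)) i := by rw [map_sum]; simp
    _ = ∑ j, a j * d i j := by simp [Finset.sum_apply, hd]
  have happly : ∀ a : Fin 3 → ℝ, fderiv ℝ ι x a = (a, D a) := by
    intro a; rw [hfι]; rfl
  rw [happly, happly, happly, hι x, hcurl x]
  simp only [thetaDthetaVal, Fin.sum_univ_three, hDu, hpd,
    Matrix.det_fin_three, Matrix.transpose_apply, Matrix.of_apply,
    Matrix.cons_val', Matrix.cons_val_zero, Matrix.cons_val_one, Matrix.head_cons,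
    Matrix.cons_val_two, Matrix.tail_cons, Matrix.empty_val', Matrix.cons_val_fin_one,
    Matrix.head_fin_const]
  ring
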